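/- Let μ be a Borel probability measure on a metric space and y a point with μ(B(y,r)) ≤ Cr^α for all r > 0 (C ≥ 1, α > 0). Suppose (r_k)_{k≥1} is a decreasing sequence of radii with r_k → 0, and (n_k) a sequence of positive integers with n_{k+1}/n_k → 1, such that exp(−χ n_{k⁺(r)}/2) ≤ K R^{−1} r and μ(B(y,r)) ≤ Q exp(−h n_{k⁻(r)}/2) for all small r, where k⁻(r), k⁺(r) are the largest/smallest indices straddling r as in the paper, χ, h > 0, K, R, Q > 0. Then there exist constants C' ≥ 1 and α' > 0 such that μ(B(y,r)) ≤ C'·r^{α'} for all r > 0 sufficiently small; one may take α' = h/(2χ). -/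

import Mathlib

open MeasureTheory Metric Filter Set
open scoped ENNReal Topology

theorem frostman_interpolation {X : Type*} [MetricSpace X] [MeasurableSpace X]
    (μ : Measure X) [IsProbabilityMeasure μ] (y : X)
    (C α : ℝ) (hC : 1 ≤ C) (hα : 0 < α)
    (hpow : ∀ r : ℝ, 0 < r → μ (ball y r) ≤ ENNReal.ofReal (C * r ^ α))
    (rk : ℕ → ℝ) (hrk : StrictAnti rk) (hrk0 : Tendsto rk atTop (𝓝 0))
    (n : ℕ → ℕ) (hnpos : ∀ k, 0 < n k)
    (hn : Tendsto (fun k : ℕ => (n (k + 1) : ℝ) / n k) atTop (𝓝 1))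
    (χ h K R Q : ℝ) (hχ : 0 < χ) (hh : 0 < h) (hK : 0 < K) (hR : 0 < R) (hQ : 0 < Q)
    (kminus kplus : ℝ → ℕ)
    (hkto : Tendsto kminus (𝓝[>] (0 : ℝ)) atTop)
    (hsmall : ∀ᶠ r in 𝓝[>] (0 : ℝ),
      Real.exp (-χ * (n (kplus r) : ℝ) / 2) ≤ K * R⁻¹ * r ∧
      (μ (ball y r)).toReal ≤ Q * Real.exp (-h * (n (kminus r) : ℝ) / 2) ∧
      kminus r ≤ kplus r ∧ kplus r ≤ kminus r + 1) :
    ∃ C' : ℝ, 1 ≤ C' ∧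
      ∀ᶠ r in 𝓝[>] (0 : ℝ), (μ (ball y r)).toReal ≤ C' * r ^ (h / (2 * χ)) := by
  set β : ℝ := h / (2 * χ) with hβdef
  have hβ : 0 < β := div_pos hh (by linarith)
  refine ⟨max 1 (Q * (K / R) ^ β), le_max_left _ _, ?_⟩
  -- eventually n (k+1) ≤ 2 * n k
  have hrat : ∀ᶠ k in atTop, (n (k + 1) : ℝ) ≤ 2 * n k := by
    have : ∀ᶠ k in atTop, (n (k + 1) : ℝ) / n k < 2 := by
      have := hn.eventually (eventually_lt_nhds (by norm_num : (1:ℝ) < 2))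
      exact this
    filter_upwards [this] with k hk
    have hnk : (0:ℝ) < n k := by exact_mod_cast hnpos k
    have := (div_lt_iff₀ hnk).mp hk
    linarith
  obtain ⟨k₀, hk₀⟩ := eventually_atTop.mp hrat
  have hk0ev : ∀ᶠ r in 𝓝[>] (0:ℝ), k₀ ≤ kminus r := hkto.eventually_ge_atTop k₀
  filter_upwards [hsmall, hk0ev, self_mem_nhdsWithin] with r ⟨h1, h2, h3, h4⟩ hk0r hrpos
  have hrpos' : (0:ℝ) < r := hrpos
  -- n (kplus r) ≤ 2 * n (kminus r)
  have hnn : (n (kplus r) : ℝ) ≤ 2 * n (kminus r) := by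
    rcases Nat.le_and_le_add_one_iff.mp ⟨h3, h4⟩ with hcase | hcase
    · rw [hcase]
      have : (0:ℝ) ≤ n (kminus r) := by positivity
      linarith
    · rw [hcase]
      exact hk₀ _ hk0r
  -- exp(-h n⁻ /2) ≤ exp(-h n⁺ /4)
  have step1 : Real.exp (-h * (n (kminus r) : ℝ) / 2) ≤
      Real.exp (-h * (n (kplus r) : ℝ) / 4) := by
    apply Real.exp_le_exp.mpr
    nlinarith
  -- exp(-h n⁺ /4) = exp(-χ n⁺ /2) ^ β
  have step2 : Real.exp (-h * (n (kplus r) : ℝ) / 4) =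
      Real.exp (-χ * (n (kplus r) : ℝ) / 2) ^ β := by
    rw [Real.rpow_def_of_pos (Real.exp_pos _), Real.log_exp]
    congr 1
    field_simp [hβdef]
    have e : χ * β * 2 = h := by rw [hβdef]; field_simp
    linear_combination (2 * (n (kplus r) : ℝ)) * e
  -- exp(-χ n⁺ /2)^β ≤ (K R⁻¹ r)^β
  have step3 : Real.exp (-χ * (n (kplus r) : ℝ) / 2) ^ β ≤ (K * R⁻¹ * r) ^ β :=
    Real.rpow_le_rpow (Real.exp_pos _).le h1 hβ.le
  have step4 : (K * R⁻¹ * r) ^ β = (K / R) ^ β * r ^ β := by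
    rw [← Real.mul_rpow (by positivity) hrpos'.le, div_eq_mul_inv]
  calc (μ (ball y r)).toReal ≤ Q * Real.exp (-h * (n (kminus r) : ℝ) / 2) := h2
    _ ≤ Q * ((K / R) ^ β * r ^ β) := by
        apply mul_le_mul_of_nonneg_left _ hQ.le
        calc Real.exp (-h * (n (kminus r) : ℝ) / 2)
            ≤ Real.exp (-h * (n (kplus r) : ℝ) / 4) := step1
          _ = Real.exp (-χ * (n (kplus r) : ℝ) / 2) ^ β := step2
          _ ≤ (K * R⁻¹ * r) ^ β := step3
          _ = (K / R) ^ β * r ^ β := step4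
    _ = (Q * (K / R) ^ β) * r ^ β := by ring
    _ ≤ max 1 (Q * (K / R) ^ β) * r ^ β := by
        apply mul_le_mul_of_nonneg_right (le_max_right _ _)
        positivity
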